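/- For α > 1, the curve γ(s) = (cosh((α-1)s))^{1/(α-1)} · (sinh s, cosh s) satisfies lim_{s→∞} (γ₂(s) - γ₁(s)) = 2^{1/(1-α)}, where γ = (γ₁,γ₂). Hence γ is asymptotic to the line y = x + 2^{1/(1-α)}. -/
import Mathlib


open Filter

/-- For α > 1, the curve γ(s) = cosh((α-1)s)^{1/(α-1)}(sinh s, cosh s) satisfies
lim_{s→∞} (γ₂(s) - γ₁(s)) = 2^{1/(1-α)}. -/
theorem stmt_10 (α : ℝ) (hα : 1 < α) (ρ : ℝ → ℝ)
    (hρ : ∀ s : ℝ, ρ s = (Real.cosh ((α - 1) * s)) ^ (1 / (α - 1))) :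
    Tendsto (fun s : ℝ => ρ s * Real.cosh s - ρ s * Real.sinh s) atTop
      (nhds ((2 : ℝ) ^ (1 / (1 - α)))) := by
  have hβ : (0 : ℝ) < α - 1 := by linarith
  have hβ' : α - 1 ≠ 0 := ne_of_gt hβ
  have key : ∀ s : ℝ, ρ s * Real.cosh s - ρ s * Real.sinh s
      = ((1 + Real.exp (-(2 * (α - 1) * s))) / 2) ^ (1 / (α - 1)) := by
    intro s
    have hm : (0 : ℝ) < (1 + Real.exp (-(2 * (α - 1) * s))) / 2 := by
      positivity
    have hcosh : Real.cosh ((α - 1) * s)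
        = Real.exp ((α - 1) * s) * ((1 + Real.exp (-(2 * (α - 1) * s))) / 2) := by
      have h1 : Real.exp ((α - 1) * s) * Real.exp (-(2 * (α - 1) * s))
          = Real.exp (-((α - 1) * s)) := by
        rw [← Real.exp_add]; ring_nf
      rw [Real.cosh_eq, ← h1]; ring
    have hρs : ρ s = Real.exp s * ((1 + Real.exp (-(2 * (α - 1) * s))) / 2) ^ (1 / (α - 1)) := by
      rw [hρ s, hcosh, Real.mul_rpow (Real.exp_pos _).le hm.le, ← Real.exp_mul]
      congr 1
      field_simp
    have hcs : Real.cosh s - Real.sinh s = Real.exp (-s) := Real.cosh_sub_sinh s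
    have : ρ s * Real.cosh s - ρ s * Real.sinh s = ρ s * (Real.cosh s - Real.sinh s) := by ring
    rw [this, hcs, hρs]
    rw [mul_comm (Real.exp s), mul_assoc, ← Real.exp_add]
    simp
  simp only [key]
  have h0 : Tendsto (fun s : ℝ => Real.exp (-(2 * (α - 1) * s))) atTop (nhds 0) := by
    have h1 : Tendsto (fun s : ℝ => 2 * (α - 1) * s) atTop atTop :=
      Tendsto.const_mul_atTop (by positivity) tendsto_id
    exact (Real.tendsto_exp_neg_atTop_nhds_zero).comp h1
  have h2 : Tendsto (fun s : ℝ => (1 + Real.exp (-(2 * (α - 1) * s))) / 2) atTop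
      (nhds ((1 : ℝ) / 2)) := by
    have := (h0.const_add 1).div_const 2
    simpa using this
  have h3 := h2.rpow_const (p := 1 / (α - 1)) (Or.inl (by norm_num))
  convert h3 using 2
  have : (1 : ℝ) / (1 - α) = -(1 / (α - 1)) := by rw [show (1:ℝ) - α = -(α - 1) by ring, div_neg]
  rw [this, Real.rpow_neg (by norm_num), one_div (2:ℝ), Real.inv_rpow (by norm_num)]
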